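/- Let C be a category, F : C → C an endofunctor, and α : F ⇒ 1_C, β : 1_C ⇒ F natural transformations with α ∘ β = id. Then F reflects colimits. -/

import Mathlib

open CategoryTheory Limits

/-- If an endofunctor `F` admits natural transformations `α : F ⟶ 𝟭 C` and
`β : 𝟭 C ⟶ F` with `β ≫ α = 𝟙 (𝟭 C)`, then `F` reflects colimits. -/
theorem stmt_1 {C : Type*} [Category C] (F : C ⥤ C)
    (α : F ⟶ 𝟭 C) (β : 𝟭 C ⟶ F) (hαβ : β ≫ α = 𝟙 (𝟭 C))
    {J : Type*} [Category J] (D : J ⥤ C) (c : Cocone D)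
    (hc : IsColimit (F.mapCocone c)) : Nonempty (IsColimit c) := by
  have hpt : ∀ X : C, β.app X ≫ α.app X = 𝟙 X := fun X => congrArg (fun t => t.app X) hαβ
  refine ⟨?_⟩
  let s' : ∀ s : Cocone D, Cocone (D ⋙ F) := fun s =>
    { pt := s.pt
      ι := { app := fun j => α.app (D.obj j) ≫ s.ι.app j
             naturality := by
               intro i j f
               simp only [Functor.comp_obj, Functor.comp_map, Functor.const_obj_obj,
                 Functor.const_obj_map, Category.comp_id]
               rw [← Category.assoc, α.naturality]
               simp } }
  refine { desc := fun s => β.app c.pt ≫ hc.desc (s' s), fac := ?_, uniq := ?_ }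
  · intro s j
    have hβ := β.naturality (c.ι.app j)
    simp only [Functor.id_map, Functor.const_obj_obj] at hβ
    rw [← Category.assoc, hβ, Category.assoc]
    have := hc.fac (s' s) j
    simp only [Functor.mapCocone_ι_app] at this
    simp only [Functor.id_map, this]
    rw [← Category.assoc, hpt, Category.id_comp]
  · intro s m hm
    have h : α.app c.pt ≫ m = hc.desc (s' s) := by
      apply hc.hom_ext
      intro j
      have := hc.fac (s' s) j
      simp only [Functor.mapCocone_ι_app] at this ⊢
      rw [this, ← Category.assoc, α.naturality]
      simp [hm j]
      rfl
    show m = β.app c.pt ≫ hc.desc (s' s)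
    rw [← h, ← Category.assoc, hpt]
    simp
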